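/- Let G be a k-graph on n vertices with δ_{k−1}(G) ≥ εn. For every ε > 0 there exists an integer m and n₀ such that if n > n₀, there exist (k−2)-sets f_1, ..., f_m ⊆ V(G) with |⃐N(f_1) ∪ ... ∪ ⃐N(f_m)| > C(n, k−1) − C(εn, k−1). -/

import Mathlib

open Finset

/-- The neighbourhood `N(e) = {v : e ∪ {v} ∈ E}` of a set `e` in a hypergraph `G`. -/
def nbhd {α : Type*} [Fintype α] [DecidableEq α] (G : Finset (Finset α))
    (e : Finset α) : Finset α :=
  Finset.univ.filter fun v => insert v e ∈ G

/-- The back neighbourhood of `f`: all `(k-1)`-sets `e` with `e ∪ {v} ∈ E` for every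
`v ∈ f`. -/
def backNbhd {α : Type*} [Fintype α] [DecidableEq α] (G : Finset (Finset α))
    (k : ℕ) (f : Finset α) : Finset (Finset α) :=
  (Finset.univ.powersetCard (k - 1)).filter fun e => ∀ v ∈ f, insert v e ∈ G

private lemma choose_mul_fact_le_pow (n j : ℕ) :
    (n.choose j : ℝ) * (j.factorial : ℝ) ≤ (n : ℝ) ^ j := by
  have h : j.factorial * n.choose j ≤ n ^ j := by
    rw [← Nat.descFactorial_eq_factorial_mul_choose]
    exact Nat.descFactorial_le_pow n j
  calc (n.choose j : ℝ) * (j.factorial : ℝ) = ((j.factorial * n.choose j : ℕ) : ℝ) := by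
        push_cast; ring
    _ ≤ ((n ^ j : ℕ) : ℝ) := by exact_mod_cast h
    _ = (n : ℝ) ^ j := by push_cast; ring

private lemma choose_ratio (ε : ℝ) (hε : 0 < ε) (n j : ℕ)
    (h : 2 * ((j : ℝ) + 1) ≤ ε * n) :
    (ε / 2) ^ j * (n.choose j : ℝ) ≤ (Nat.choose ⌊ε * n⌋₊ j : ℝ) := by
  set N := ⌊ε * (n : ℝ)⌋₊ with hNdef
  have hfl : (ε * n : ℝ) - 1 ≤ (N : ℝ) := by
    have := Nat.lt_floor_add_one (ε * (n : ℝ))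
    linarith
  have hjN : j ≤ N := by
    have : (j : ℝ) ≤ (N : ℝ) := by linarith
    exact_mod_cast this
  have key : ε * n / 2 ≤ ((N - j : ℕ) : ℝ) := by
    rw [Nat.cast_sub hjN]
    linarith
  have pw : ((N - j : ℕ) : ℝ) ^ j ≤ (N.choose j : ℝ) * (j.factorial : ℝ) := by
    have h1 : (N - j) ^ j ≤ N.descFactorial j :=
      le_trans (Nat.pow_le_pow_left (by omega) j) (Nat.pow_sub_le_descFactorial N j)
    rw [Nat.descFactorial_eq_factorial_mul_choose] at h1
    calc ((N - j : ℕ) : ℝ) ^ j = (((N - j) ^ j : ℕ) : ℝ) := by push_cast; ring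
      _ ≤ ((j.factorial * N.choose j : ℕ) : ℝ) := by exact_mod_cast h1
      _ = (N.choose j : ℝ) * (j.factorial : ℝ) := by push_cast; ring
  have hfpos : (0 : ℝ) < (j.factorial : ℝ) := by exact_mod_cast j.factorial_pos
  rw [← mul_le_mul_iff_of_pos_right hfpos]
  have hchain : (ε / 2) ^ j * (n.choose j : ℝ) * (j.factorial : ℝ)
      ≤ (ε / 2) ^ j * (n : ℝ) ^ j := by
    have := choose_mul_fact_le_pow n j
    have hp : (0 : ℝ) ≤ (ε / 2) ^ j := by positivity
    calc (ε / 2) ^ j * (n.choose j : ℝ) * (j.factorial : ℝ)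
        = (ε / 2) ^ j * ((n.choose j : ℝ) * (j.factorial : ℝ)) := by ring
      _ ≤ (ε / 2) ^ j * (n : ℝ) ^ j := by exact mul_le_mul_of_nonneg_left this hp
  have hmid : (ε / 2) ^ j * (n : ℝ) ^ j ≤ ((N - j : ℕ) : ℝ) ^ j := by
    have : (ε / 2) ^ j * (n : ℝ) ^ j = (ε * n / 2) ^ j := by
      rw [← mul_pow]; ring_nf
    rw [this]
    exact pow_le_pow_left₀ (by positivity) key j
  linarith

private lemma cover_step {α : Type} [Fintype α] [DecidableEq α] (G : Finset (Finset α))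
    (k N : ℕ)
    (hN : ∀ e : Finset α, e.card = k - 1 → N ≤ (nbhd G e).card)
    (hn : k - 2 ≤ Fintype.card α)
    (U : Finset (Finset α)) (hU : U ⊆ Finset.univ.powersetCard (k - 1)) :
    ∃ g : Finset α, g.card = k - 2 ∧
      U.card * N.choose (k - 2) ≤
        (Fintype.card α).choose (k - 2) * (U ∩ backNbhd G k g).card := by
  classical
  set F := (Finset.univ.powersetCard (k - 2) : Finset (Finset α)) with hF
  have hFcard : F.card = (Fintype.card α).choose (k - 2) := by
    rw [hF, Finset.card_powersetCard, Finset.card_univ]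
  have hFne : F.Nonempty := by
    obtain ⟨t, ht, htc⟩ := Finset.exists_subset_card_eq
      (s := (Finset.univ : Finset α)) (n := k - 2) (by simpa using hn)
    exact ⟨t, Finset.mem_powersetCard.mpr ⟨ht, htc⟩⟩
  have hsum : U.card * N.choose (k - 2) ≤ ∑ g ∈ F, (U ∩ backNbhd G k g).card := by
    have swap : ∑ g ∈ F, (U ∩ backNbhd G k g).card
        = ∑ e ∈ U, (F.filter fun g => e ∈ backNbhd G k g).card := by
      have h1 : ∀ g, (U ∩ backNbhd G k g).card
          = ∑ e ∈ U, if e ∈ backNbhd G k g then 1 else 0 := by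
        intro g
        rw [← Finset.filter_mem_eq_inter, Finset.card_filter]
      simp_rw [h1, Finset.card_filter]
      exact Finset.sum_comm
    rw [swap]
    have hper : ∀ e ∈ U, N.choose (k - 2) ≤ (F.filter fun g => e ∈ backNbhd G k g).card := by
      intro e he
      have hecard : e.card = k - 1 := (Finset.mem_powersetCard.mp (hU he)).2
      have hsub : (nbhd G e).powersetCard (k - 2) ⊆
          F.filter fun g => e ∈ backNbhd G k g := by
        intro g hg
        obtain ⟨hgs, hgc⟩ := Finset.mem_powersetCard.mp hg
        refine Finset.mem_filter.mpr ⟨Finset.mem_powersetCard.mpr ⟨Finset.subset_univ g, hgc⟩, ?_⟩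
        refine Finset.mem_filter.mpr ⟨Finset.mem_powersetCard.mpr
          ⟨Finset.subset_univ e, hecard⟩, ?_⟩
        intro v hv
        have := hgs hv
        simpa [nbhd] using this
      calc N.choose (k - 2) ≤ ((nbhd G e).card).choose (k - 2) :=
            Nat.choose_le_choose _ (hN e hecard)
        _ = ((nbhd G e).powersetCard (k - 2)).card := (Finset.card_powersetCard _ _).symm
        _ ≤ _ := Finset.card_le_card hsub
    calc U.card * N.choose (k - 2) = ∑ _e ∈ U, N.choose (k - 2) := by
          rw [Finset.sum_const, smul_eq_mul]
      _ ≤ ∑ e ∈ U, (F.filter fun g => e ∈ backNbhd G k g).card :=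
          Finset.sum_le_sum hper
  have hex : ∃ g ∈ F, U.card * N.choose (k - 2) ≤ F.card * (U ∩ backNbhd G k g).card := by
    apply Finset.exists_le_of_sum_le hFne
    calc ∑ _g ∈ F, U.card * N.choose (k - 2) = F.card * (U.card * N.choose (k - 2)) := by
          rw [Finset.sum_const, smul_eq_mul]
      _ ≤ F.card * ∑ g ∈ F, (U ∩ backNbhd G k g).card := Nat.mul_le_mul_left _ hsum
      _ = ∑ g ∈ F, F.card * (U ∩ backNbhd G k g).card := by rw [Finset.mul_sum]
  obtain ⟨g, hgF, hg⟩ := hex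
  exact ⟨g, (Finset.mem_powersetCard.mp hgF).2, by rwa [hFcard] at hg⟩

private lemma cover_iter {α : Type} [Fintype α] [DecidableEq α] (G : Finset (Finset α))
    (k : ℕ) (c : ℝ) (hc0 : 0 ≤ c) (hc1 : c ≤ 1)
    (hstep : ∀ U ⊆ Finset.univ.powersetCard (k - 1), ∃ g : Finset α, g.card = k - 2 ∧
      c * (U.card : ℝ) ≤ ((U ∩ backNbhd G k g).card : ℝ)) :
    ∀ a : ℕ, ∃ f : Fin a → Finset α, (∀ i, (f i).card = k - 2) ∧
      (((Finset.univ.powersetCard (k - 1) \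
          Finset.univ.biUnion fun i => backNbhd G k (f i)).card : ℝ)) ≤
        (1 - c) ^ a * ((Fintype.card α).choose (k - 1) : ℝ) := by
  intro a
  induction a with
  | zero =>
    refine ⟨Fin.elim0, fun i => i.elim0, ?_⟩
    simp [Finset.card_powersetCard]
  | succ a ih =>
    obtain ⟨f, hfc, hf⟩ := ih
    set U := Finset.univ.powersetCard (k - 1) \
      Finset.univ.biUnion fun i => backNbhd G k (f i) with hUdef
    obtain ⟨g, hgc, hg⟩ := hstep U Finset.sdiff_subset
    refine ⟨(Fin.snoc f g : Fin (a+1) → Finset α), ?_, ?_⟩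
    · intro i
      refine Fin.lastCases ?_ ?_ i
      · simp [hgc]
      · intro j; simp [hfc j]
    · have hsub : (Finset.univ.powersetCard (k - 1) \
          Finset.univ.biUnion fun i => backNbhd G k ((Fin.snoc f g : Fin (a+1) → Finset α) i)) ⊆
          U \ backNbhd G k g := by
        intro e he
        simp only [hUdef, Finset.mem_sdiff, Finset.mem_biUnion, Finset.mem_univ,
          true_and, not_exists] at he ⊢
        obtain ⟨heP, hnot⟩ := he
        refine ⟨⟨heP, fun i => ?_⟩, ?_⟩
        · have := hnot i.castSucc
          simpa using this
        · have := hnot (Fin.last a)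
          simpa using this
      have hcard1 : ((Finset.univ.powersetCard (k - 1) \
          Finset.univ.biUnion fun i => backNbhd G k ((Fin.snoc f g : Fin (a+1) → Finset α) i)).card : ℝ)
          ≤ ((U \ backNbhd G k g).card : ℝ) := by
        exact_mod_cast Finset.card_le_card hsub
      have hcard2 : ((U \ backNbhd G k g).card : ℝ)
          = (U.card : ℝ) - ((U ∩ backNbhd G k g).card : ℝ) := by
        have h := Finset.card_inter_add_card_sdiff U (backNbhd G k g)
        have : ((U ∩ backNbhd G k g).card : ℝ) + ((U \ backNbhd G k g).card : ℝ)
            = (U.card : ℝ) := by exact_mod_cast congrArg (Nat.cast (R := ℝ)) h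
        linarith
      have hc' : ((U \ backNbhd G k g).card : ℝ) ≤ (1 - c) * (U.card : ℝ) := by
        rw [hcard2]; linarith
      calc ((Finset.univ.powersetCard (k - 1) \
            Finset.univ.biUnion fun i => backNbhd G k ((Fin.snoc f g : Fin (a+1) → Finset α) i)).card : ℝ)
          ≤ (1 - c) * (U.card : ℝ) := hcard1.trans hc'
        _ ≤ (1 - c) * ((1 - c) ^ a * ((Fintype.card α).choose (k - 1) : ℝ)) :=
            mul_le_mul_of_nonneg_left hf (by linarith)
        _ = (1 - c) ^ (a + 1) * ((Fintype.card α).choose (k - 1) : ℝ) := by ring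

private lemma back_nbhds_cover_aux (k : ℕ) (hk : 2 ≤ k) (ε : ℝ) (hε : 0 < ε) (hε1 : ε ≤ 1) :
    ∃ m n₀ : ℕ, ∀ (α : Type) [Fintype α] [DecidableEq α]
      (G : Finset (Finset α)), (∀ e ∈ G, e.card = k) →
      n₀ < Fintype.card α →
      (∀ e : Finset α, e.card = k - 1 →
        ε * (Fintype.card α : ℝ) ≤ ((nbhd G e).card : ℝ)) →
      ∃ f : Fin m → Finset α, (∀ i, (f i).card = k - 2) ∧
        ((Nat.choose (Fintype.card α) (k - 1) : ℝ) -
            (Nat.choose ⌊ε * (Fintype.card α : ℝ)⌋₊ (k - 1) : ℝ)) <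
          (((Finset.univ.biUnion fun i => backNbhd G k (f i)).card : ℝ)) := by
  classical
  set c : ℝ := (ε / 2) ^ (k - 2) with hcdef
  have hc0 : 0 < c := by positivity
  have hc1 : c ≤ 1 := pow_le_one₀ (by linarith) (by linarith)
  have hd0 : (0 : ℝ) < (ε / 2) ^ (k - 1) := by positivity
  obtain ⟨m, hm⟩ := exists_pow_lt_of_lt_one hd0 (show (1 : ℝ) - c < 1 by linarith)
  refine ⟨m, k + ⌈2 * (k : ℝ) / ε⌉₊, ?_⟩
  intro α _ _ G hGk hn hdeg
  set n := Fintype.card α with hndef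
  have hnk : k ≤ n := by omega
  have hceil : ⌈2 * (k : ℝ) / ε⌉₊ ≤ n := by omega
  have hεn : 2 * (k : ℝ) ≤ ε * n := by
    have h1 : 2 * (k : ℝ) / ε ≤ (⌈2 * (k : ℝ) / ε⌉₊ : ℝ) := Nat.le_ceil _
    have h2 : ((⌈2 * (k : ℝ) / ε⌉₊ : ℕ) : ℝ) ≤ (n : ℝ) := by exact_mod_cast hceil
    have h3 : 2 * (k : ℝ) / ε ≤ (n : ℝ) := h1.trans h2
    have := (div_le_iff₀ hε).mp h3
    linarith
  set N := ⌊ε * (n : ℝ)⌋₊ with hNdef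
  have hN : ∀ e : Finset α, e.card = k - 1 → N ≤ (nbhd G e).card := by
    intro e he
    calc N ≤ ⌊((nbhd G e).card : ℝ)⌋₊ := Nat.floor_mono (hdeg e he)
      _ = (nbhd G e).card := Nat.floor_natCast _
  have hk2cast : ((k - 2 : ℕ) : ℝ) = (k : ℝ) - 2 := by
    have : (2 : ℕ) ≤ k := hk
    push_cast [Nat.cast_sub this]
    ring
  have hk1cast : ((k - 1 : ℕ) : ℝ) = (k : ℝ) - 1 := by
    have h1 : (1 : ℕ) ≤ k := by omega
    push_cast [Nat.cast_sub h1]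
    ring
  have hkR : (2 : ℝ) ≤ (k : ℝ) := by exact_mod_cast hk
  have hstep : ∀ U ⊆ Finset.univ.powersetCard (k - 1), ∃ g : Finset α, g.card = k - 2 ∧
      c * (U.card : ℝ) ≤ ((U ∩ backNbhd G k g).card : ℝ) := by
    intro U hU
    obtain ⟨g, hgc, hg⟩ := cover_step G k N hN (by omega) U hU
    refine ⟨g, hgc, ?_⟩
    have hratio : c * (n.choose (k - 2) : ℝ) ≤ (N.choose (k - 2) : ℝ) := by
      have h := choose_ratio ε hε n (k - 2) (by rw [hk2cast]; linarith)
      rwa [← hcdef, ← hNdef] at h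
    have hpos : (0 : ℝ) < (n.choose (k - 2) : ℝ) := by
      exact_mod_cast Nat.choose_pos (by omega)
    have hg' : (U.card : ℝ) * (N.choose (k - 2) : ℝ)
        ≤ (n.choose (k - 2) : ℝ) * ((U ∩ backNbhd G k g).card : ℝ) := by
      exact_mod_cast hg
    have hUc : (0 : ℝ) ≤ (U.card : ℝ) := Nat.cast_nonneg _
    have h3 : c * (U.card : ℝ) * (n.choose (k - 2) : ℝ)
        ≤ ((U ∩ backNbhd G k g).card : ℝ) * (n.choose (k - 2) : ℝ) := by
      calc c * (U.card : ℝ) * (n.choose (k - 2) : ℝ)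
          = (U.card : ℝ) * (c * (n.choose (k - 2) : ℝ)) := by ring
        _ ≤ (U.card : ℝ) * (N.choose (k - 2) : ℝ) :=
            mul_le_mul_of_nonneg_left hratio hUc
        _ ≤ (n.choose (k - 2) : ℝ) * ((U ∩ backNbhd G k g).card : ℝ) := hg'
        _ = ((U ∩ backNbhd G k g).card : ℝ) * (n.choose (k - 2) : ℝ) := by ring
    exact le_of_mul_le_mul_right h3 hpos
  obtain ⟨f, hfc, hf⟩ := cover_iter G k c hc0.le hc1 hstep m
  refine ⟨f, hfc, ?_⟩
  have hBsub : (Finset.univ.biUnion fun i => backNbhd G k (f i)) ⊆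
      Finset.univ.powersetCard (k - 1) := by
    intro e he
    obtain ⟨i, _, hei⟩ := Finset.mem_biUnion.mp he
    exact (Finset.mem_filter.mp hei).1
  have hcard : ((Finset.univ.powersetCard (k - 1) \
      Finset.univ.biUnion fun i => backNbhd G k (f i)).card : ℝ)
      = (n.choose (k - 1) : ℝ)
        - ((Finset.univ.biUnion fun i => backNbhd G k (f i)).card : ℝ) := by
    rw [Finset.cast_card_sdiff hBsub, Finset.card_powersetCard, Finset.card_univ]
  have hCpos : (0 : ℝ) < (n.choose (k - 1) : ℝ) := by
    exact_mod_cast Nat.choose_pos (by omega)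
  have hfinal : ((Finset.univ.powersetCard (k - 1) \
      Finset.univ.biUnion fun i => backNbhd G k (f i)).card : ℝ)
      < (N.choose (k - 1) : ℝ) := by
    have h2 : (1 - c) ^ m * (n.choose (k - 1) : ℝ)
        < (ε / 2) ^ (k - 1) * (n.choose (k - 1) : ℝ) :=
      mul_lt_mul_of_pos_right hm hCpos
    have h3 : (ε / 2) ^ (k - 1) * (n.choose (k - 1) : ℝ) ≤ (N.choose (k - 1) : ℝ) := by
      have h := choose_ratio ε hε n (k - 1) (by rw [hk1cast]; linarith)
      rwa [← hNdef] at h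
    linarith
  rw [hcard] at hfinal
  linarith

theorem back_nbhds_cover (k : ℕ) (hk : 2 ≤ k) (ε : ℝ) (hε : 0 < ε) :
    ∃ m n₀ : ℕ, ∀ (α : Type) [Fintype α] [DecidableEq α]
      (G : Finset (Finset α)), (∀ e ∈ G, e.card = k) →
      n₀ < Fintype.card α →
      (∀ e : Finset α, e.card = k - 1 →
        ε * (Fintype.card α : ℝ) ≤ ((nbhd G e).card : ℝ)) →
      ∃ f : Fin m → Finset α, (∀ i, (f i).card = k - 2) ∧
        ((Nat.choose (Fintype.card α) (k - 1) : ℝ) -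
            (Nat.choose ⌊ε * (Fintype.card α : ℝ)⌋₊ (k - 1) : ℝ)) <
          (((Finset.univ.biUnion fun i => backNbhd G k (f i)).card : ℝ)) := by
  obtain ⟨m, n₀, H⟩ := back_nbhds_cover_aux k hk (min ε 1)
    (lt_min hε one_pos) (min_le_right _ _)
  refine ⟨m, n₀, ?_⟩
  intro α _ _ G hGk hn hdeg
  obtain ⟨f, hfc, hf⟩ := H α G hGk hn (fun e he =>
    le_trans (mul_le_mul_of_nonneg_right (min_le_left ε 1) (Nat.cast_nonneg _)) (hdeg e he))
  refine ⟨f, hfc, ?_⟩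
  have hle : (Nat.choose ⌊min ε 1 * (Fintype.card α : ℝ)⌋₊ (k - 1) : ℝ)
      ≤ (Nat.choose ⌊ε * (Fintype.card α : ℝ)⌋₊ (k - 1) : ℝ) := by
    exact_mod_cast Nat.choose_le_choose _ (Nat.floor_mono
      (mul_le_mul_of_nonneg_right (min_le_left ε 1) (Nat.cast_nonneg _)))
  linarith
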